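/- Let n ≥ 2, s ∈ (0,1), σ ∈ (−1,1), and fix r, δ > 0. There exists a constant C > 0, depending only on n, s, r, δ (and not on the set), such that for every measurable E ⊆ H which is a local minimizer of the fractional capillarity energy in H, one has ∬_{𝓠_{r,δ}} |χ_E(x) − χ_E(y)|² |x−y|^{−(n+s)} dx dy ≤ C, where 𝓠_{r,δ} := ℝ^{2n} ∖ (B_{r+δ}^c × B_{r+δ}^c). -/

import Mathlib

open MeasureTheory Metric Set Filter
open scoped ENNReal NNReal Pointwise

noncomputable section

/-- `ℝⁿ` with the Euclidean norm. -/
abbrev Rn (n : ℕ) := EuclideanSpace ℝ (Fin n)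

/-- The fractional interaction `𝓘_s(A,B)` (`ℝ≥0∞`-valued). -/
def frI (n : ℕ) (s : ℝ) (A B : Set (Rn n)) : ℝ≥0∞ :=
  ∫⁻ p in A ×ˢ B, ENNReal.ofReal (‖p.1 - p.2‖ ^ (-((n : ℝ) + s)))

/-- The fractional interaction `𝓘_s(A,B)` (real-valued). -/
def frIr (n : ℕ) (s : ℝ) (A B : Set (Rn n)) : ℝ := (frI n s A B).toReal

/-- The last coordinate `x_n` of a point of `ℝⁿ`. -/
def lastCoord (n : ℕ) (x : Rn n) : ℝ :=
  if h : 0 < n then x ⟨n - 1, Nat.sub_lt h one_pos⟩ else 0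

/-- The upper half-space `H = {x ∈ ℝⁿ : x_n > 0}`. -/
def halfSpace (n : ℕ) : Set (Rn n) := {x | 0 < lastCoord n x}

/-- `E ⊆ H` is a local minimizer of the fractional capillarity energy in `H`. -/
def LocalMin (n : ℕ) (s σ : ℝ) (E : Set (Rn n)) : Prop :=
  ∀ R : ℝ, 0 < R →
    frI n s (E ∩ ball 0 R) (Eᶜ ∩ ball 0 R) < ⊤ ∧
    ∀ F : Set (Rn n), MeasurableSet F → F ⊆ halfSpace n →
      F \ ball 0 R = E \ ball 0 R →
      frIr n s (E ∩ ball 0 R) (Eᶜ ∩ halfSpace n)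
          + frIr n s (E ∩ (ball 0 R)ᶜ) (Eᶜ ∩ ball 0 R ∩ halfSpace n)
          + σ * frIr n s (E ∩ ball 0 R) (halfSpace n)ᶜ
        ≤ frIr n s (F ∩ ball 0 R) (Fᶜ ∩ halfSpace n)
          + frIr n s (F ∩ (ball 0 R)ᶜ) (Fᶜ ∩ ball 0 R ∩ halfSpace n)
          + σ * frIr n s (F ∩ ball 0 R) (halfSpace n)ᶜ

/-- The vertical coordinate `t` of a point of `ℝ^{n+1}`. -/
def tcoord (n : ℕ) (X : Rn (n + 1)) : ℝ := X (Fin.last n)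

/-- The horizontal part `x` of a point of `ℝ^{n+1}`. -/
def xpart (n : ℕ) (X : Rn (n + 1)) : Rn n := WithLp.toLp 2 (fun i : Fin n => X i.castSucc)

/-- The point `(x,t) ∈ ℝ^{n+1}`. -/
def emb (n : ℕ) (x : Rn n) (t : ℝ) : Rn (n + 1) :=
  WithLp.toLp 2 (Fin.snoc (α := fun _ => ℝ) (WithLp.ofLp x) t)

/-- The open upper half-space `ℝ^{n+1}_+ = {t > 0}`. -/
def upperHalf (n : ℕ) : Set (Rn (n + 1)) := {X | 0 < tcoord n X}

/-- The fractional Poisson kernel `𝐏_s(x,t)`, normalized so that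
`∫ 𝐏_s(x,t) dx = 1` for all `t > 0`. -/
def poissonKer (n : ℕ) (s : ℝ) (x : Rn n) (t : ℝ) : ℝ :=
  (∫ z : Rn n, (‖z‖ ^ 2 + 1) ^ (-(((n : ℝ) + s) / 2)))⁻¹ * t ^ s *
    (‖x‖ ^ 2 + t ^ 2) ^ (-(((n : ℝ) + s) / 2))

/-- The `s`-extension `𝐄_u` of a function `u : ℝⁿ → ℝ`. -/
def extu (n : ℕ) (s : ℝ) (u : Rn n → ℝ) (X : Rn (n + 1)) : ℝ :=
  ∫ y, u y * poissonKer n s (xpart n X - y) (tcoord n X)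

/-- The `s`-extension `𝐄_E = 𝐄_{χ_E}` of a set `E ⊆ ℝⁿ`. -/
def extE (n : ℕ) (s : ℝ) (E : Set (Rn n)) : Rn (n + 1) → ℝ :=
  extu n s (E.indicator fun _ => (1 : ℝ))

/-- The energy `𝓕_{s,σ}(U,Ω)`. -/
def energy (n : ℕ) (s σ : ℝ) (U : Rn (n + 1) → ℝ) (Ω : Set (Rn (n + 1))) : ℝ :=
  (∫ X in Ω ∩ upperHalf n, tcoord n X ^ (1 - s) * ‖fderiv ℝ U X‖ ^ 2)
    + (σ - 1) *
      ∫ p in {x : Rn n | emb n x 0 ∈ Ω} ×ˢ (halfSpace n)ᶜ,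
        U (emb n p.1 0) * ‖p.1 - p.2‖ ^ (-((n : ℝ) + s))

/-- The monotonicity quantity `Φ_E(r) = r^{s-n} 𝓕_{s,σ}(𝐄_E, 𝓑_r)`. -/
def Phi (n : ℕ) (s σ : ℝ) (E : Set (Rn n)) (r : ℝ) : ℝ :=
  r ^ (s - (n : ℝ)) * energy n s σ (extE n s E) (ball (0 : Rn (n + 1)) r)

/-- The fractional perimeter `Per_s(F,ω)` (real-valued). -/
def perS (n : ℕ) (s : ℝ) (F ω : Set (Rn n)) : ℝ :=
  frIr n s (F ∩ ω) (Fᶜ ∩ ω) + frIr n s (F ∩ ω) (Fᶜ ∩ ωᶜ) + frIr n s (F ∩ ωᶜ) (Fᶜ ∩ ω)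

/-- The fractional perimeter `Per_s(F,ω)` (`ℝ≥0∞`-valued). -/
def perSE (n : ℕ) (s : ℝ) (F ω : Set (Rn n)) : ℝ≥0∞ :=
  frI n s (F ∩ ω) (Fᶜ ∩ ω) + frI n s (F ∩ ω) (Fᶜ ∩ ωᶜ) + frI n s (F ∩ ωᶜ) (Fᶜ ∩ ω)

/-- `Per_{s,σ}(F,B_R)`. -/
def perSigma (n : ℕ) (s σ : ℝ) (F : Set (Rn n)) (R : ℝ) : ℝ :=
  perS n s F (ball 0 R ∩ halfSpace n) + (σ - 1) * frIr n s (F ∩ ball 0 R) (halfSpace n)ᶜ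

/-- The fractional capillarity energy `𝓒_{s,σ}(E,ω)`. -/
def capEnergy (n : ℕ) (s σ : ℝ) (E ω : Set (Rn n)) : ℝ :=
  frIr n s E (ω \ E) + σ * frIr n s E ωᶜ

/-- A set `Ω ⊆ ℝ^{n+1}` has Lipschitz boundary: near each boundary point, after an
isometry of `ℝ^{n+1}`, the set is the region above the graph of a Lipschitz function. -/
def HasLipschitzBoundary (n : ℕ) (Ω : Set (Rn (n + 1))) : Prop :=
  ∀ p ∈ frontier Ω, ∃ (g : Rn (n + 1) ≃ᵢ Rn (n + 1)) (f : Rn n → ℝ) (K : ℝ≥0) (ε : ℝ),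
    0 < ε ∧ LipschitzWith K f ∧
      Ω ∩ ball p ε = {X ∈ ball p ε | f (xpart n (g X)) < tcoord n (g X)}

/-- A set `ω ⊆ ℝⁿ` has `C¹` boundary: near each boundary point it is the sublevel set
of a `C¹` defining function with nonvanishing gradient. -/
def HasC1Boundary (n : ℕ) (ω : Set (Rn n)) : Prop :=
  ∀ p ∈ frontier ω, ∃ (f : Rn n → ℝ) (U : Set (Rn n)), IsOpen U ∧ p ∈ U ∧
    ContDiffOn ℝ 1 f U ∧ (∀ q ∈ U, fderiv ℝ f q ≠ 0) ∧ ω ∩ U = {q ∈ U | f q < 0}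

/-- Convergence `χ_{E_k} → χ_E` in `L¹_loc(ℝⁿ)`. -/
def TendstoL1loc (n : ℕ) (Ek : ℕ → Set (Rn n)) (E : Set (Rn n)) : Prop :=
  ∀ K : Set (Rn n), IsCompact K →
    Tendsto (fun k => ∫ x in K,
        |(Ek k).indicator (fun _ => (1 : ℝ)) x - E.indicator (fun _ => (1 : ℝ)) x|)
      atTop (nhds 0)

/-- The quantity `M(ϑ,s)` appearing in the fractional Young law. -/
def Mfun (ϑ s : ℝ) : ℝ :=
  2 * ∫ r in Ioi (0 : ℝ), ∫ t in Ioo (0 : ℝ) ϑ,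
      r * (r ^ 2 + 2 * r * Real.cos t + 1) ^ (-((2 + s) / 2))

lemma knl_meas (n : ℕ) (s : ℝ) :
    Measurable fun p : Rn n × Rn n => ENNReal.ofReal (‖p.1 - p.2‖ ^ (-((n : ℝ) + s))) :=
  ((measurable_fst.sub measurable_snd).norm.pow measurable_const).ennreal_ofReal

lemma frI_eq (n : ℕ) (s : ℝ) (A B : Set (Rn n)) :
    frI n s A B = ∫⁻ x in A, ∫⁻ y in B, ENNReal.ofReal (‖x - y‖ ^ (-((n : ℝ) + s))) := by
  unfold frI
  rw [Measure.volume_eq_prod, ← Measure.prod_restrict, lintegral_prod _ (knl_meas n s).aemeasurable]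

lemma frI_symm (n : ℕ) (s : ℝ) (A B : Set (Rn n)) : frI n s A B = frI n s B A := by
  unfold frI
  rw [Measure.volume_eq_prod, ← Measure.prod_restrict, ← Measure.prod_restrict,
    ← lintegral_prod_swap (fun p : Rn n × Rn n => ENNReal.ofReal (‖p.1 - p.2‖ ^ (-((n : ℝ) + s))))]
  refine lintegral_congr fun z => ?_
  simp [Prod.swap, norm_sub_rev]

lemma frI_mono (n : ℕ) (s : ℝ) {A A' B B' : Set (Rn n)} (hA : A ⊆ A') (hB : B ⊆ B') :
    frI n s A B ≤ frI n s A' B' :=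
  lintegral_mono_set (Set.prod_mono hA hB)

lemma frI_union_left (n : ℕ) (s : ℝ) (A A' B : Set (Rn n)) :
    frI n s (A ∪ A') B ≤ frI n s A B + frI n s A' B := by
  unfold frI; rw [Set.union_prod]; exact lintegral_union_le _ _ _

lemma frI_union_right (n : ℕ) (s : ℝ) (A B B' : Set (Rn n)) :
    frI n s A (B ∪ B') ≤ frI n s A B + frI n s A B' := by
  unfold frI; rw [Set.prod_union]; exact lintegral_union_le _ _ _

lemma exists_dyadic {r : ℝ} (hr : 1 ≤ r) : ∃ k : ℕ, (2:ℝ)^k ≤ r ∧ r < 2^(k+1) := by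
  have hr0 : 0 < r := lt_of_lt_of_le one_pos hr
  refine ⟨⌊Real.logb 2 r⌋₊, ?_, ?_⟩
  · have h1 : (⌊Real.logb 2 r⌋₊ : ℝ) ≤ Real.logb 2 r :=
      Nat.floor_le (Real.logb_nonneg one_lt_two hr)
    calc (2:ℝ)^(⌊Real.logb 2 r⌋₊ : ℕ) = (2:ℝ) ^ ((⌊Real.logb 2 r⌋₊ : ℕ) : ℝ) := by
          rw [Real.rpow_natCast]
      _ ≤ (2:ℝ) ^ Real.logb 2 r := by
          exact Real.rpow_le_rpow_of_exponent_le one_le_two h1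
      _ = r := Real.rpow_logb two_pos (by norm_num) hr0
  · have h2 : Real.logb 2 r < (⌊Real.logb 2 r⌋₊ : ℝ) + 1 := Nat.lt_floor_add_one _
    calc r = (2:ℝ) ^ Real.logb 2 r := (Real.rpow_logb two_pos (by norm_num) hr0).symm
      _ < (2:ℝ) ^ (((⌊Real.logb 2 r⌋₊ : ℕ) : ℝ) + 1) :=
          Real.rpow_lt_rpow_of_exponent_lt one_lt_two (by push_cast; linarith)
      _ = (2:ℝ) ^ (⌊Real.logb 2 r⌋₊ + 1 : ℕ) := by
          rw [← Real.rpow_natCast]; norm_num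

lemma pow_fact {t s : ℝ} (n k : ℕ) (ht : 0 < t) :
    (t*2^k) ^ (-((n:ℝ)+s)) * (t*2^(k+1)) ^ (n:ℕ) = t ^ (-s) * 2^n * ((2:ℝ)⁻¹ ^ s)^k := by
  have h1 : (0:ℝ) < t*2^k := by positivity
  have h2 : (0:ℝ) < t*2^(k+1) := by positivity
  have hi : (0:ℝ) < (2:ℝ)⁻¹ ^ s := by positivity
  have hL : (0:ℝ) < (t*2^k) ^ (-((n:ℝ)+s)) * (t*2^(k+1)) ^ (n:ℕ) := by positivity
  have hR : (0:ℝ) < t ^ (-s) * 2^n * ((2:ℝ)⁻¹ ^ s)^k := by positivity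
  apply Real.log_injOn_pos (mem_Ioi.2 hL) (mem_Ioi.2 hR)
  rw [Real.log_mul (by positivity) (by positivity), Real.log_mul (by positivity) (by positivity),
    Real.log_rpow h1, Real.log_pow,
    Real.log_mul ht.ne' (by positivity), Real.log_mul ht.ne' (by positivity),
    Real.log_mul (by positivity : (t:ℝ) ^ (-s) ≠ 0) (by positivity),
    Real.log_pow, Real.log_pow, Real.log_pow,
    Real.log_rpow ht, Real.log_pow, Real.log_rpow (by norm_num : (0:ℝ) < 2⁻¹), Real.log_inv]
  push_cast
  ring

def kconst (n : ℕ) (s : ℝ) : ℝ≥0∞ :=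
  volume (ball (0:Rn n) 1) * (1 - ENNReal.ofReal ((2:ℝ)⁻¹ ^ s))⁻¹ * ENNReal.ofReal (2^n)

lemma ratio_lt_one {s : ℝ} (hs : 0 < s) : ENNReal.ofReal ((2:ℝ)⁻¹ ^ s) < 1 := by
  rw [show (1:ℝ≥0∞) = ENNReal.ofReal 1 by simp]
  exact (ENNReal.ofReal_lt_ofReal_iff one_pos).2
    (Real.rpow_lt_one (by norm_num) (by norm_num) hs)

lemma kconst_lt_top (n : ℕ) {s : ℝ} (hs : 0 < s) : kconst n s < ⊤ := by
  have h1 : (1 - ENNReal.ofReal ((2:ℝ)⁻¹ ^ s))⁻¹ < ⊤ := by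
    rw [ENNReal.inv_lt_top]
    exact tsub_pos_of_lt (ratio_lt_one hs)
  exact ENNReal.mul_lt_top (ENNReal.mul_lt_top measure_ball_lt_top h1) ENNReal.ofReal_lt_top

lemma inner_far (n : ℕ) {s t : ℝ} (hs : 0 < s) (ht : 0 < t) (x : Rn n) :
    ∫⁻ y in (ball x t)ᶜ, ENNReal.ofReal (‖x - y‖ ^ (-((n:ℝ)+s)))
      ≤ kconst n s * ENNReal.ofReal (t ^ (-s)) := by
  have cover : (ball x t)ᶜ ⊆ ⋃ k : ℕ, (closedBall x (t*2^(k+1)) \ ball x (t*2^k)) := by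
    intro y hy
    have hd : t ≤ dist y x := by
      simpa [mem_ball'] using hy
    have hd' : t ≤ dist x y := by rwa [dist_comm]
    obtain ⟨k, h1, h2⟩ := exists_dyadic (r := dist y x / t) ((one_le_div ht).2 hd)
    refine mem_iUnion.2 ⟨k, ⟨?_, ?_⟩⟩
    · refine mem_closedBall.2 ?_
      have := (div_lt_iff₀ ht).1 h2
      nlinarith [this]
    · intro hball
      have hlt := mem_ball.1 hball
      have := (le_div_iff₀ ht).1 h1
      nlinarith [this, hlt]
  have hnc : (0:ℝ) ≤ (n:ℝ) + s := by positivity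
  have step : ∀ k : ℕ, ∫⁻ y in closedBall x (t*2^(k+1)) \ ball x (t*2^k),
      ENNReal.ofReal (‖x - y‖ ^ (-((n:ℝ)+s)))
      ≤ ENNReal.ofReal (t ^ (-s) * 2^n * ((2:ℝ)⁻¹ ^ s)^k) * volume (ball (0:Rn n) 1) := by
    intro k
    have hb : ∀ y ∈ closedBall x (t*2^(k+1)) \ ball x (t*2^k),
        ENNReal.ofReal (‖x - y‖ ^ (-((n:ℝ)+s)))
          ≤ ENNReal.ofReal ((t*2^k) ^ (-((n:ℝ)+s))) := by
      intro y hy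
      have hdy : t*2^k ≤ ‖x - y‖ := by
        have := hy.2
        rw [mem_ball] at this
        rw [show ‖x - y‖ = dist y x by rw [dist_comm, dist_eq_norm]]
        linarith [not_lt.1 this]
      exact ENNReal.ofReal_le_ofReal
        (Real.rpow_le_rpow_of_nonpos (by positivity) hdy (neg_nonpos.2 hnc))
    calc ∫⁻ y in closedBall x (t*2^(k+1)) \ ball x (t*2^k),
          ENNReal.ofReal (‖x - y‖ ^ (-((n:ℝ)+s)))
        ≤ ∫⁻ _ in closedBall x (t*2^(k+1)) \ ball x (t*2^k),
            ENNReal.ofReal ((t*2^k) ^ (-((n:ℝ)+s))) := setLIntegral_mono measurable_const hb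
      _ = ENNReal.ofReal ((t*2^k) ^ (-((n:ℝ)+s)))
            * volume (closedBall x (t*2^(k+1)) \ ball x (t*2^k)) := setLIntegral_const _ _
      _ ≤ ENNReal.ofReal ((t*2^k) ^ (-((n:ℝ)+s))) * volume (closedBall x (t*2^(k+1))) :=
          mul_le_mul_right (measure_mono diff_subset) _
      _ = ENNReal.ofReal ((t*2^k) ^ (-((n:ℝ)+s)))
            * (ENNReal.ofReal ((t*2^(k+1)) ^ (n:ℕ)) * volume (ball (0:Rn n) 1)) := by
          rw [Measure.addHaar_closedBall _ _ (by positivity), finrank_euclideanSpace_fin]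
      _ = ENNReal.ofReal (t ^ (-s) * 2^n * ((2:ℝ)⁻¹ ^ s)^k) * volume (ball (0:Rn n) 1) := by
          rw [← mul_assoc, ← ENNReal.ofReal_mul (by positivity), pow_fact n k ht]
  calc ∫⁻ y in (ball x t)ᶜ, ENNReal.ofReal (‖x - y‖ ^ (-((n:ℝ)+s)))
      ≤ ∫⁻ y in ⋃ k : ℕ, (closedBall x (t*2^(k+1)) \ ball x (t*2^k)),
          ENNReal.ofReal (‖x - y‖ ^ (-((n:ℝ)+s))) := lintegral_mono_set cover
    _ ≤ ∑' k : ℕ, ∫⁻ y in closedBall x (t*2^(k+1)) \ ball x (t*2^k),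
          ENNReal.ofReal (‖x - y‖ ^ (-((n:ℝ)+s))) := lintegral_iUnion_le _ _
    _ ≤ ∑' k : ℕ, ENNReal.ofReal (t ^ (-s) * 2^n * ((2:ℝ)⁻¹ ^ s)^k)
          * volume (ball (0:Rn n) 1) := ENNReal.tsum_le_tsum fun k => step k
    _ = kconst n s * ENNReal.ofReal (t ^ (-s)) := by
        have hterm : ∀ k : ℕ, ENNReal.ofReal (t ^ (-s) * 2^n * ((2:ℝ)⁻¹ ^ s)^k)
            * volume (ball (0:Rn n) 1)
            = (volume (ball (0:Rn n) 1) * ENNReal.ofReal (t ^ (-s)) * ENNReal.ofReal (2^n))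
              * (ENNReal.ofReal ((2:ℝ)⁻¹ ^ s))^k := by
          intro k
          rw [ENNReal.ofReal_mul (by positivity), ENNReal.ofReal_mul (by positivity),
            ENNReal.ofReal_pow (by positivity), ENNReal.ofReal_pow (by positivity)]
          ring
        simp_rw [hterm]
        rw [ENNReal.tsum_mul_left, ENNReal.tsum_geometric, kconst]
        ring

lemma frI_le_sepA (n : ℕ) {s t : ℝ} (hs : 0 < s) (ht : 0 < t) {A B : Set (Rn n)}
    (hsep : ∀ x ∈ A, B ⊆ (ball x t)ᶜ) :
    frI n s A B ≤ kconst n s * ENNReal.ofReal (t ^ (-s)) * volume A := by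
  rw [frI_eq]
  calc ∫⁻ x in A, ∫⁻ y in B, ENNReal.ofReal (‖x - y‖ ^ (-((n:ℝ)+s)))
      ≤ ∫⁻ _ in A, kconst n s * ENNReal.ofReal (t ^ (-s)) := by
        refine setLIntegral_mono measurable_const fun x hx => ?_
        exact (lintegral_mono_set (hsep x hx)).trans (inner_far n hs ht x)
    _ = kconst n s * ENNReal.ofReal (t ^ (-s)) * volume A := setLIntegral_const _ _

lemma frI_le_sepB (n : ℕ) {s t : ℝ} (hs : 0 < s) (ht : 0 < t) {A B : Set (Rn n)}
    (hsep : ∀ y ∈ B, A ⊆ (ball y t)ᶜ) :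
    frI n s A B ≤ kconst n s * ENNReal.ofReal (t ^ (-s)) * volume B := by
  rw [frI_symm]
  exact frI_le_sepA n hs ht hsep

lemma pow_fact2 {R s d : ℝ} (hR : 0 < R) (hd : 0 < d) (n k : ℕ) :
    (R*(2:ℝ)⁻¹^(k+1)) ^ (-s) * (R^n * d * (2:ℝ)⁻¹^k)
      = (R ^ (-s) * 2^s * R^n * d) * ((2:ℝ)⁻¹ ^ (1-s))^k := by
  have hb : (0:ℝ) < R*(2:ℝ)⁻¹^(k+1) := by positivity
  have hL : (0:ℝ) < (R*(2:ℝ)⁻¹^(k+1)) ^ (-s) * (R^n * d * (2:ℝ)⁻¹^k) := by positivity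
  have hR2 : (0:ℝ) < (R ^ (-s) * 2^s * R^n * d) * ((2:ℝ)⁻¹ ^ (1-s))^k := by positivity
  apply Real.log_injOn_pos (mem_Ioi.2 hL) (mem_Ioi.2 hR2)
  repeat rw [Real.log_mul (by positivity) (by positivity)]
  rw [Real.log_rpow hb]
  repeat rw [Real.log_mul (by positivity) (by positivity)]
  simp only [Real.log_pow, Real.log_rpow hR, Real.log_rpow (show (0:ℝ) < 2 by norm_num),
    Real.log_rpow (show (0:ℝ) < 2⁻¹ by norm_num), Real.log_inv]
  push_cast
  ring

lemma pow_fact3 {R s : ℝ} (hR : 0 < R) (k : ℕ) :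
    (R*(2:ℝ)⁻¹^(k+1)) ^ (-s) * (R*(2:ℝ)⁻¹^(k+1))
      = (R ^ (1-s) * (2:ℝ)⁻¹ ^ (1-s)) * ((2:ℝ)⁻¹ ^ (1-s))^k := by
  have hb : (0:ℝ) < R*(2:ℝ)⁻¹^(k+1) := by positivity
  have hL : (0:ℝ) < (R*(2:ℝ)⁻¹^(k+1)) ^ (-s) * (R*(2:ℝ)⁻¹^(k+1)) := by positivity
  have hR2 : (0:ℝ) < (R ^ (1-s) * (2:ℝ)⁻¹ ^ (1-s)) * ((2:ℝ)⁻¹ ^ (1-s))^k := by positivity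
  apply Real.log_injOn_pos (mem_Ioi.2 hL) (mem_Ioi.2 hR2)
  repeat rw [Real.log_mul (by positivity) (by positivity)]
  rw [Real.log_rpow hb]
  repeat rw [Real.log_mul (by positivity) (by positivity)]
  simp only [Real.log_pow, Real.log_rpow hR, Real.log_rpow (show (0:ℝ) < 2 by norm_num),
    Real.log_rpow (show (0:ℝ) < 2⁻¹ by norm_num), Real.log_inv]
  push_cast
  ring

lemma abs_coord {n : ℕ} (x : Rn n) (i : Fin n) : |x i| ≤ ‖x‖ := by
  rw [EuclideanSpace.norm_eq, ← Real.sqrt_sq_eq_abs]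
  apply Real.sqrt_le_sqrt
  have := Finset.single_le_sum (f := fun j => ‖x j‖^2) (fun j _ => by positivity)
    (Finset.mem_univ i)
  simpa [Real.norm_eq_abs, sq_abs] using this

lemma ratio2_lt_one {s : ℝ} (hs1 : s < 1) : ENNReal.ofReal ((2:ℝ)⁻¹ ^ (1-s)) < 1 :=
  ratio_lt_one (by linarith)

lemma annulus_int (n : ℕ) (hn : 2 ≤ n) {s R : ℝ} (hs : 0 < s) (hs1 : s < 1) (hR : 0 < R) :
    ∫⁻ x in ball (0:Rn n) R, ENNReal.ofReal ((R - ‖x‖) ^ (-s)) < ⊤ := by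
  haveI : Nonempty (Fin n) := ⟨⟨0, by omega⟩⟩
  haveI : Nontrivial (Rn n) := inferInstance
  set κ := volume (ball (0:Rn n) 1) with hκ
  have hκfin : κ ≠ ⊤ := measure_ball_lt_top.ne
  have cover : ball (0:Rn n) R ⊆ ⋃ k : ℕ,
      (closedBall (0:Rn n) (R - R*(2:ℝ)⁻¹^(k+1)) \ ball (0:Rn n) (R - R*(2:ℝ)⁻¹^k)) := by
    intro x hx
    rw [mem_ball_zero_iff] at hx
    have hd : 0 < R - ‖x‖ := by linarith
    obtain ⟨k, h1, h2⟩ := exists_dyadic (r := R / (R - ‖x‖)) ((one_le_div hd).2 (by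
      have := norm_nonneg x; linarith))
    have hp1 : (0:ℝ) < 2^k := by positivity
    have hp2 : (0:ℝ) < 2^(k+1) := by positivity
    have e1 : (2:ℝ)⁻¹^k = ((2:ℝ)^k)⁻¹ := by rw [inv_pow]
    have e2 : (2:ℝ)⁻¹^(k+1) = ((2:ℝ)^(k+1))⁻¹ := by rw [inv_pow]
    have hA : (2:ℝ)^k ≤ R / (R - ‖x‖) := h1
    have hB : R / (R - ‖x‖) < 2^(k+1) := h2
    rw [le_div_iff₀ hd] at hA
    rw [div_lt_iff₀ hd] at hB
    refine mem_iUnion.2 ⟨k, ⟨?_, ?_⟩⟩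
    · rw [mem_closedBall_zero_iff, e2]
      have h3 : R * ((2:ℝ)^(k+1))⁻¹ < R - ‖x‖ := by
        rw [mul_inv_lt_iff₀ hp2]; linarith
      linarith
    · rw [mem_ball_zero_iff, e1, not_lt]
      have h3 : R * ((2:ℝ)^k)⁻¹ ≥ R - ‖x‖ := by
        rw [ge_iff_le, le_mul_inv_iff₀ hp1]; linarith
      linarith
  have hd2 : (0:ℝ) < (n:ℝ) := by positivity
  have step : ∀ k : ℕ, ∫⁻ x in closedBall (0:Rn n) (R - R*(2:ℝ)⁻¹^(k+1))
        \ ball (0:Rn n) (R - R*(2:ℝ)⁻¹^k), ENNReal.ofReal ((R - ‖x‖) ^ (-s))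
      ≤ (ENNReal.ofReal (R ^ (-s) * 2^s * R^n * n) * κ) * (ENNReal.ofReal ((2:ℝ)⁻¹^(1-s)))^k := by
    intro k
    have hu1 : (2:ℝ)⁻¹^(k+1) ≤ 1 := by
      apply pow_le_one₀ <;> norm_num
    have hu0 : (0:ℝ) < (2:ℝ)⁻¹^(k+1) := by positivity
    have hu1' : (2:ℝ)⁻¹^k ≤ 1 := by
      apply pow_le_one₀ <;> norm_num
    have hu0' : (0:ℝ) < (2:ℝ)⁻¹^k := by positivity
    have hb : ∀ x ∈ closedBall (0:Rn n) (R - R*(2:ℝ)⁻¹^(k+1))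
          \ ball (0:Rn n) (R - R*(2:ℝ)⁻¹^k),
        ENNReal.ofReal ((R - ‖x‖) ^ (-s)) ≤ ENNReal.ofReal ((R*(2:ℝ)⁻¹^(k+1)) ^ (-s)) := by
      intro x hx
      have h1 : ‖x‖ ≤ R - R*(2:ℝ)⁻¹^(k+1) := mem_closedBall_zero_iff.1 hx.1
      exact ENNReal.ofReal_le_ofReal
        (Real.rpow_le_rpow_of_nonpos (by positivity) (by linarith) (by linarith))
    have hvol : volume (closedBall (0:Rn n) (R - R*(2:ℝ)⁻¹^(k+1))
          \ ball (0:Rn n) (R - R*(2:ℝ)⁻¹^k))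
        ≤ ENNReal.ofReal (R^n * n * (2:ℝ)⁻¹^k) * κ := by
      have hsub : closedBall (0:Rn n) (R - R*(2:ℝ)⁻¹^(k+1)) \ ball (0:Rn n) (R - R*(2:ℝ)⁻¹^k)
          ⊆ closedBall (0:Rn n) R \ ball (0:Rn n) (R - R*(2:ℝ)⁻¹^k) := by
        apply diff_subset_diff_left
        apply closedBall_subset_closedBall
        nlinarith
      refine (measure_mono hsub).trans ?_
      rw [measure_diff (ball_subset_closedBall.trans (closedBall_subset_closedBall (by nlinarith)))
        measurableSet_ball.nullMeasurableSet
        measure_ball_lt_top.ne, Measure.addHaar_closedBall _ _ hR.le,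
        Measure.addHaar_ball _ _ (by nlinarith : (0:ℝ) ≤ R - R*(2:ℝ)⁻¹^k),
        finrank_euclideanSpace_fin, ← ENNReal.sub_mul (fun _ _ => hκfin),
        ← ENNReal.ofReal_sub _ (pow_nonneg (by nlinarith) n)]
      apply mul_le_mul_left
      apply ENNReal.ofReal_le_ofReal
      have hber : 1 - (n:ℝ)*(2:ℝ)⁻¹^k ≤ (1 - (2:ℝ)⁻¹^k)^n := by
        have := one_add_mul_le_pow (a := -((2:ℝ)⁻¹^k)) (by linarith) n
        simpa [← sub_eq_add_neg] using this
      have hexp : (R - R*(2:ℝ)⁻¹^k)^n = R^n * (1 - (2:ℝ)⁻¹^k)^n := by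
        rw [← mul_pow]; ring_nf
      rw [hexp]
      nlinarith [pow_pos hR n, pow_nonneg hR.le n]
    calc ∫⁻ x in closedBall (0:Rn n) (R - R*(2:ℝ)⁻¹^(k+1)) \ ball (0:Rn n) (R - R*(2:ℝ)⁻¹^k),
          ENNReal.ofReal ((R - ‖x‖) ^ (-s))
        ≤ ∫⁻ _ in closedBall (0:Rn n) (R - R*(2:ℝ)⁻¹^(k+1)) \ ball (0:Rn n) (R - R*(2:ℝ)⁻¹^k),
            ENNReal.ofReal ((R*(2:ℝ)⁻¹^(k+1)) ^ (-s)) := setLIntegral_mono measurable_const hb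
      _ = ENNReal.ofReal ((R*(2:ℝ)⁻¹^(k+1)) ^ (-s)) * volume (closedBall (0:Rn n)
            (R - R*(2:ℝ)⁻¹^(k+1)) \ ball (0:Rn n) (R - R*(2:ℝ)⁻¹^k)) := setLIntegral_const _ _
      _ ≤ ENNReal.ofReal ((R*(2:ℝ)⁻¹^(k+1)) ^ (-s)) * (ENNReal.ofReal (R^n * n * (2:ℝ)⁻¹^k) * κ) :=
            mul_le_mul_right hvol _
      _ = (ENNReal.ofReal (R ^ (-s) * 2^s * R^n * n) * κ) * (ENNReal.ofReal ((2:ℝ)⁻¹^(1-s)))^k := by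
            rw [← mul_assoc, ← ENNReal.ofReal_mul (by positivity), pow_fact2 hR hd2 n k,
              ENNReal.ofReal_mul (by positivity), ENNReal.ofReal_pow (by positivity)]
            ring
  calc ∫⁻ x in ball (0:Rn n) R, ENNReal.ofReal ((R - ‖x‖) ^ (-s))
      ≤ ∫⁻ x in ⋃ k : ℕ, (closedBall (0:Rn n) (R - R*(2:ℝ)⁻¹^(k+1))
          \ ball (0:Rn n) (R - R*(2:ℝ)⁻¹^k)), ENNReal.ofReal ((R - ‖x‖) ^ (-s)) :=
        lintegral_mono_set cover
    _ ≤ ∑' k : ℕ, ∫⁻ x in closedBall (0:Rn n) (R - R*(2:ℝ)⁻¹^(k+1))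
          \ ball (0:Rn n) (R - R*(2:ℝ)⁻¹^k), ENNReal.ofReal ((R - ‖x‖) ^ (-s)) :=
        lintegral_iUnion_le _ _
    _ ≤ ∑' k : ℕ, (ENNReal.ofReal (R ^ (-s) * 2^s * R^n * n) * κ)
          * (ENNReal.ofReal ((2:ℝ)⁻¹^(1-s)))^k := ENNReal.tsum_le_tsum step
    _ = (ENNReal.ofReal (R ^ (-s) * 2^s * R^n * n) * κ)
          * (1 - ENNReal.ofReal ((2:ℝ)⁻¹^(1-s)))⁻¹ := by
        rw [ENNReal.tsum_mul_left, ENNReal.tsum_geometric]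
    _ < ⊤ := by
        apply ENNReal.mul_lt_top (ENNReal.mul_lt_top ENNReal.ofReal_lt_top
          measure_ball_lt_top)
        rw [ENNReal.inv_lt_top]
        exact tsub_pos_of_lt (ratio2_lt_one hs1)

lemma frI_ball_compl (n : ℕ) (hn : 2 ≤ n) {s R : ℝ} (hs : 0 < s) (hs1 : s < 1) (hR : 0 < R) :
    frI n s (ball 0 R) ((ball 0 R)ᶜ) < ⊤ := by
  rw [frI_eq]
  have hb : ∀ x ∈ ball (0:Rn n) R,
      ∫⁻ y in (ball (0:Rn n) R)ᶜ, ENNReal.ofReal (‖x - y‖ ^ (-((n:ℝ)+s)))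
        ≤ kconst n s * ENNReal.ofReal ((R - ‖x‖) ^ (-s)) := by
    intro x hx
    rw [mem_ball_zero_iff] at hx
    have hsub : (ball (0:Rn n) R)ᶜ ⊆ (ball x (R - ‖x‖))ᶜ := by
      intro y hy
      rw [mem_compl_iff, mem_ball] at hy ⊢
      rw [not_lt] at hy ⊢
      rw [dist_eq_norm] at hy ⊢
      have := norm_sub_norm_le y x
      have h0 : ‖y - 0‖ = ‖y‖ := by simp
      rw [h0] at hy
      linarith [this]
    exact (lintegral_mono_set hsub).trans (inner_far n hs (by linarith) x)
  calc ∫⁻ x in ball (0:Rn n) R, ∫⁻ y in (ball (0:Rn n) R)ᶜ,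
        ENNReal.ofReal (‖x - y‖ ^ (-((n:ℝ)+s)))
      ≤ ∫⁻ x in ball (0:Rn n) R, kconst n s * ENNReal.ofReal ((R - ‖x‖) ^ (-s)) := by
        refine setLIntegral_mono (Measurable.const_mul ?_ _) hb
        exact ((measurable_const.sub measurable_norm).pow measurable_const).ennreal_ofReal
    _ = kconst n s * ∫⁻ x in ball (0:Rn n) R, ENNReal.ofReal ((R - ‖x‖) ^ (-s)) :=
        lintegral_const_mul' _ _ (kconst_lt_top n hs).ne
    _ < ⊤ := ENNReal.mul_lt_top (kconst_lt_top n hs) (annulus_int n hn hs hs1 hR)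

lemma slab_vol (n : ℕ) (j : Fin n) {R a b : ℝ} (hR : 0 ≤ R) (hab : a ≤ b) :
    volume (closedBall (0:Rn n) R ∩ {x : Rn n | x j ∈ Ioc a b})
      ≤ ENNReal.ofReal (b - a) * ENNReal.ofReal (2*R) ^ (n-1) := by
  classical
  set J : Fin n → Set ℝ := fun i => if i = j then Ioc a b else Icc (-R) R with hJ
  have hsub : closedBall (0:Rn n) R ∩ {x : Rn n | x j ∈ Ioc a b}
      ⊆ (MeasurableEquiv.toLp 2 (Fin n → ℝ)).symm ⁻¹' (Set.univ.pi J) := by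
    intro x hx
    intro i _
    show x i ∈ J i
    simp only [hJ]
    by_cases hij : i = j
    · subst hij; simp only [if_pos rfl]
      exact hx.2
    · simp only [if_neg hij]
      have h1 : |x i| ≤ ‖x‖ := abs_coord x i
      have h2 : ‖x‖ ≤ R := by
        have := mem_closedBall_zero_iff.1 hx.1
        exact this
      constructor
      · linarith [neg_abs_le (x i)]
      · linarith [le_abs_self (x i)]
  have hmeas : MeasurableSet (Set.univ.pi J) :=
    MeasurableSet.univ_pi fun i => by
      by_cases hij : i = j
      · simp [hJ, hij]
      · simp [hJ, hij]
  calc volume (closedBall (0:Rn n) R ∩ {x : Rn n | x j ∈ Ioc a b})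
      ≤ volume ((MeasurableEquiv.toLp 2 (Fin n → ℝ)).symm ⁻¹' (Set.univ.pi J)) :=
        measure_mono hsub
    _ = volume (Set.univ.pi J) :=
        (EuclideanSpace.volume_preserving_symm_measurableEquiv_toLp (Fin n)).measure_preimage
          hmeas.nullMeasurableSet
    _ = ∏ i, volume (J i) := volume_pi_pi J
    _ = ENNReal.ofReal (b - a) * ENNReal.ofReal (2*R) ^ (n-1) := by
        rw [← Finset.mul_prod_erase Finset.univ _ (Finset.mem_univ j)]
        have h1 : volume (J j) = ENNReal.ofReal (b - a) := by
          simp [hJ, Real.volume_Ioc]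
        have h2 : ∀ i ∈ Finset.univ.erase j, volume (J i) = ENNReal.ofReal (2*R) := by
          intro i hi
          have : i ≠ j := (Finset.mem_erase.1 hi).1
          simp [hJ, this, Real.volume_Icc]
          ring_nf
          rw [ENNReal.ofReal_mul' (by norm_num)]; simp
        rw [h1, Finset.prod_congr rfl h2, Finset.prod_const,
          Finset.card_erase_of_mem (Finset.mem_univ j), Finset.card_univ, Fintype.card_fin]

def halfSpace' (n : ℕ) : Set (Rn n) := {x | 0 < (if h : 0 < n then x ⟨n - 1, Nat.sub_lt h one_pos⟩ else 0)}

lemma lastCoord_eq {n : ℕ} (hn : 0 < n) (x : Rn n) :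
    (if h : 0 < n then x ⟨n - 1, Nat.sub_lt h one_pos⟩ else 0) = x ⟨n - 1, Nat.sub_lt hn one_pos⟩ := by
  rw [dif_pos hn]

lemma halfSpace'_measurable (n : ℕ) : MeasurableSet (halfSpace' n) := by
  by_cases hn : 0 < n
  · have : halfSpace' n = (fun x : Rn n => x ⟨n - 1, Nat.sub_lt hn one_pos⟩) ⁻¹' (Ioi 0) := by
      ext x; simp [halfSpace', lastCoord_eq hn, mem_preimage]
    rw [this]
    exact (by measurability : Measurable fun x : Rn n => x ⟨n - 1, Nat.sub_lt hn one_pos⟩)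
      measurableSet_Ioi
  · have : halfSpace' n = ∅ := by
      ext x; simp [halfSpace', dif_neg hn]
    simp [this]

lemma slab_int (n : ℕ) (hn : 2 ≤ n) {s R : ℝ} (hs : 0 < s) (hs1 : s < 1) (hR : 0 < R) :
    ∫⁻ x in ball (0:Rn n) R ∩ halfSpace' n,
      ENNReal.ofReal ((x ⟨n - 1, Nat.sub_lt (by omega) one_pos⟩ : ℝ) ^ (-s)) < ⊤ := by
  have hn0 : 0 < n := by omega
  set j : Fin n := ⟨n - 1, Nat.sub_lt hn0 one_pos⟩ with hj
  have cover : ball (0:Rn n) R ∩ halfSpace' n ⊆ ⋃ k : ℕ,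
      (closedBall (0:Rn n) R ∩ {x : Rn n | x j ∈ Ioc (R*(2:ℝ)⁻¹^(k+1)) (R*(2:ℝ)⁻¹^k)}) := by
    intro x hx
    have hxball := mem_ball_zero_iff.1 hx.1
    have hxj : 0 < x j := by
      have := hx.2
      simpa [halfSpace', lastCoord_eq hn0, hj] using this
    have hxjR : x j < R := lt_of_le_of_lt ((le_abs_self _).trans (abs_coord x j)) hxball
    obtain ⟨k, h1, h2⟩ := exists_dyadic (r := R / x j) ((one_le_div hxj).2 hxjR.le)
    have hp1 : (0:ℝ) < 2^k := by positivity
    have hp2 : (0:ℝ) < 2^(k+1) := by positivity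
    rw [le_div_iff₀ hxj] at h1
    rw [div_lt_iff₀ hxj] at h2
    refine mem_iUnion.2 ⟨k, ⟨ball_subset_closedBall hx.1, ?_⟩⟩
    constructor
    · rw [inv_pow]
      rw [mul_inv_lt_iff₀ hp2]; linarith
    · rw [inv_pow]
      rw [le_mul_inv_iff₀ hp1]; linarith
  have step : ∀ k : ℕ, ∫⁻ x in closedBall (0:Rn n) R
        ∩ {x : Rn n | x j ∈ Ioc (R*(2:ℝ)⁻¹^(k+1)) (R*(2:ℝ)⁻¹^k)},
        ENNReal.ofReal ((x j : ℝ) ^ (-s))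
      ≤ (ENNReal.ofReal (R ^ (1-s) * (2:ℝ)⁻¹ ^ (1-s)) * ENNReal.ofReal (2*R) ^ (n-1))
          * (ENNReal.ofReal ((2:ℝ)⁻¹^(1-s)))^k := by
    intro k
    have hu0 : (0:ℝ) < R*(2:ℝ)⁻¹^(k+1) := by positivity
    have hb : ∀ x ∈ closedBall (0:Rn n) R
          ∩ {x : Rn n | x j ∈ Ioc (R*(2:ℝ)⁻¹^(k+1)) (R*(2:ℝ)⁻¹^k)},
        ENNReal.ofReal ((x j : ℝ) ^ (-s)) ≤ ENNReal.ofReal ((R*(2:ℝ)⁻¹^(k+1)) ^ (-s)) := by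
      intro x hx
      exact ENNReal.ofReal_le_ofReal
        (Real.rpow_le_rpow_of_nonpos hu0 hx.2.1.le (by linarith))
    have hvol := slab_vol n j (R := R) (a := R*(2:ℝ)⁻¹^(k+1)) (b := R*(2:ℝ)⁻¹^k) hR.le
      (by rw [pow_succ]; nlinarith [pow_pos (show (0:ℝ) < 2⁻¹ by norm_num) k])
    have hba : R*(2:ℝ)⁻¹^k - R*(2:ℝ)⁻¹^(k+1) = R*(2:ℝ)⁻¹^(k+1) := by
      rw [pow_succ]; ring
    rw [hba] at hvol
    calc ∫⁻ x in closedBall (0:Rn n) R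
          ∩ {x : Rn n | x j ∈ Ioc (R*(2:ℝ)⁻¹^(k+1)) (R*(2:ℝ)⁻¹^k)},
          ENNReal.ofReal ((x j : ℝ) ^ (-s))
        ≤ ∫⁻ _ in closedBall (0:Rn n) R
            ∩ {x : Rn n | x j ∈ Ioc (R*(2:ℝ)⁻¹^(k+1)) (R*(2:ℝ)⁻¹^k)},
            ENNReal.ofReal ((R*(2:ℝ)⁻¹^(k+1)) ^ (-s)) := setLIntegral_mono measurable_const hb
      _ = ENNReal.ofReal ((R*(2:ℝ)⁻¹^(k+1)) ^ (-s)) * volume (closedBall (0:Rn n) R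
            ∩ {x : Rn n | x j ∈ Ioc (R*(2:ℝ)⁻¹^(k+1)) (R*(2:ℝ)⁻¹^k)}) := setLIntegral_const _ _
      _ ≤ ENNReal.ofReal ((R*(2:ℝ)⁻¹^(k+1)) ^ (-s))
            * (ENNReal.ofReal (R*(2:ℝ)⁻¹^(k+1)) * ENNReal.ofReal (2*R) ^ (n-1)) :=
          mul_le_mul_right hvol _
      _ = (ENNReal.ofReal (R ^ (1-s) * (2:ℝ)⁻¹ ^ (1-s)) * ENNReal.ofReal (2*R) ^ (n-1))
            * (ENNReal.ofReal ((2:ℝ)⁻¹^(1-s)))^k := by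
          rw [← mul_assoc, ← ENNReal.ofReal_mul (by positivity), pow_fact3 hR k,
            ENNReal.ofReal_mul (by positivity), ENNReal.ofReal_pow (by positivity)]
          ring
  calc ∫⁻ x in ball (0:Rn n) R ∩ halfSpace' n, ENNReal.ofReal ((x j : ℝ) ^ (-s))
      ≤ ∫⁻ x in ⋃ k : ℕ, (closedBall (0:Rn n) R
          ∩ {x : Rn n | x j ∈ Ioc (R*(2:ℝ)⁻¹^(k+1)) (R*(2:ℝ)⁻¹^k)}),
          ENNReal.ofReal ((x j : ℝ) ^ (-s)) := lintegral_mono_set cover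
    _ ≤ ∑' k : ℕ, ∫⁻ x in closedBall (0:Rn n) R
          ∩ {x : Rn n | x j ∈ Ioc (R*(2:ℝ)⁻¹^(k+1)) (R*(2:ℝ)⁻¹^k)},
          ENNReal.ofReal ((x j : ℝ) ^ (-s)) := lintegral_iUnion_le _ _
    _ ≤ ∑' k : ℕ, (ENNReal.ofReal (R ^ (1-s) * (2:ℝ)⁻¹ ^ (1-s)) * ENNReal.ofReal (2*R) ^ (n-1))
          * (ENNReal.ofReal ((2:ℝ)⁻¹^(1-s)))^k := ENNReal.tsum_le_tsum step
    _ = (ENNReal.ofReal (R ^ (1-s) * (2:ℝ)⁻¹ ^ (1-s)) * ENNReal.ofReal (2*R) ^ (n-1))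
          * (1 - ENNReal.ofReal ((2:ℝ)⁻¹^(1-s)))⁻¹ := by
        rw [ENNReal.tsum_mul_left, ENNReal.tsum_geometric]
    _ < ⊤ := by
        apply ENNReal.mul_lt_top
        · exact ENNReal.mul_lt_top ENNReal.ofReal_lt_top (ENNReal.pow_lt_top ENNReal.ofReal_lt_top)
        · rw [ENNReal.inv_lt_top]
          exact tsub_pos_of_lt (ratio2_lt_one hs1)

lemma frI_half (n : ℕ) (hn : 2 ≤ n) {s R : ℝ} (hs : 0 < s) (hs1 : s < 1) (hR : 0 < R) :
    frI n s (ball 0 R ∩ halfSpace' n) (halfSpace' n)ᶜ < ⊤ := by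
  have hn0 : 0 < n := by omega
  set j : Fin n := ⟨n - 1, Nat.sub_lt hn0 one_pos⟩ with hj
  rw [frI_eq]
  have hb : ∀ x ∈ ball (0:Rn n) R ∩ halfSpace' n,
      ∫⁻ y in (halfSpace' n)ᶜ, ENNReal.ofReal (‖x - y‖ ^ (-((n:ℝ)+s)))
        ≤ kconst n s * ENNReal.ofReal ((x j : ℝ) ^ (-s)) := by
    intro x hx
    have hxj : 0 < x j := by
      have := hx.2
      simpa [halfSpace', lastCoord_eq hn0, hj] using this
    have hsub : (halfSpace' n)ᶜ ⊆ (ball x (x j))ᶜ := by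
      intro y hy
      have hyj : y j ≤ 0 := by
        have := hy
        simp only [mem_compl_iff, halfSpace', mem_setOf_eq, lastCoord_eq hn0, not_lt] at this
        exact this
      rw [mem_compl_iff, mem_ball, not_lt, dist_comm, dist_eq_norm]
      have h1 : |(x - y) j| ≤ ‖x - y‖ := abs_coord (x - y) j
      have h2 : (x - y) j = x j - y j := rfl
      rw [h2] at h1
      have := le_abs_self (x j - y j)
      linarith
    exact (lintegral_mono_set hsub).trans (inner_far n hs hxj x)
  calc ∫⁻ x in ball (0:Rn n) R ∩ halfSpace' n, ∫⁻ y in (halfSpace' n)ᶜ,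
        ENNReal.ofReal (‖x - y‖ ^ (-((n:ℝ)+s)))
      ≤ ∫⁻ x in ball (0:Rn n) R ∩ halfSpace' n,
          kconst n s * ENNReal.ofReal ((x j : ℝ) ^ (-s)) := by
        refine setLIntegral_mono (Measurable.const_mul ?_ _) hb
        exact (((by measurability : Measurable fun x : Rn n => x j)).pow
          measurable_const).ennreal_ofReal
    _ = kconst n s * ∫⁻ x in ball (0:Rn n) R ∩ halfSpace' n,
          ENNReal.ofReal ((x j : ℝ) ^ (-s)) := lintegral_const_mul' _ _ (kconst_lt_top n hs).ne
    _ < ⊤ := ENNReal.mul_lt_top (kconst_lt_top n hs) (slab_int n hn hs hs1 hR)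

lemma halfSpace_eq (n : ℕ) : halfSpace n = halfSpace' n := rfl

lemma frI_empty (n : ℕ) (s : ℝ) (A : Set (Rn n)) : frI n s A ∅ = 0 := by
  unfold frI; simp


set_option maxHeartbeats 2000000 in
/-- uniform Gagliardo seminorm bound for local minimizers. -/
theorem stmt_14 (n : ℕ) (hn : 2 ≤ n) (s σ : ℝ) (hs : s ∈ Set.Ioo (0 : ℝ) 1)
    (hσ : σ ∈ Set.Ioo (-1 : ℝ) 1) (r δ : ℝ) (hr : 0 < r) (hδ : 0 < δ) :
    ∃ C : ℝ, 0 < C ∧ ∀ E : Set (Rn n), MeasurableSet E → E ⊆ halfSpace n →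
      LocalMin n s σ E →
      (∫⁻ p in (((ball (0 : Rn n) (r + δ))ᶜ) ×ˢ ((ball (0 : Rn n) (r + δ))ᶜ))ᶜ,
          ENNReal.ofReal
            (|E.indicator (fun _ => (1 : ℝ)) p.1 - E.indicator (fun _ => (1 : ℝ)) p.2| ^ 2
              * ‖p.1 - p.2‖ ^ (-((n : ℝ) + s))))
        ≤ ENNReal.ofReal C := by
  obtain ⟨hs0, hs1⟩ := hs
  obtain ⟨hσ1, hσ2⟩ := hσ
  have hn0 : 0 < n := by omega
  have hHm : MeasurableSet (halfSpace n) := by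
    rw [halfSpace_eq]; exact halfSpace'_measurable n
  set R : ℝ := r + δ + 1 with hRdef
  have hR : 0 < R := by positivity
  have hBBR : ball (0 : Rn n) (r + δ) ⊆ ball 0 R := ball_subset_ball (by simp [hRdef])
  have hBRB2 : ball (0 : Rn n) R ⊆ ball 0 (2*R) := ball_subset_ball (by linarith)
  set P : ℝ≥0∞ := frI n s (ball 0 R) (ball (0 : Rn n) R)ᶜ with hPdef
  have hP : P < ⊤ := frI_ball_compl n hn hs0 hs1 hR
  set Q : ℝ≥0∞ := frI n s (ball 0 R ∩ halfSpace n) (halfSpace n)ᶜ with hQdef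
  have hQ : Q < ⊤ := by
    rw [hQdef, halfSpace_eq]
    exact frI_half n hn hs0 hs1 hR
  set W : ℝ≥0∞ := kconst n s * ENNReal.ofReal ((1:ℝ) ^ (-s))
    * volume (ball (0 : Rn n) (r + δ)) with hWdef
  have hW : W < ⊤ :=
    ENNReal.mul_lt_top (ENNReal.mul_lt_top (kconst_lt_top n hs0) ENNReal.ofReal_lt_top)
      measure_ball_lt_top
  set C0 : ℝ := P.toReal + 2 * Q.toReal with hC0def
  set M : ℝ≥0∞ := 6 * ENNReal.ofReal C0 + 4 * Q + 2 * W with hMdef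
  have hM : M ≠ ⊤ := by
    rw [hMdef]
    refine (ENNReal.add_lt_top.2 ⟨ENNReal.add_lt_top.2 ⟨?_, ?_⟩, ?_⟩).ne
    · exact ENNReal.mul_lt_top (by norm_num) ENNReal.ofReal_lt_top
    · exact ENNReal.mul_lt_top (by norm_num) hQ
    · exact ENNReal.mul_lt_top (by norm_num) hW
  refine ⟨M.toReal + 1, by positivity, ?_⟩
  intro E hEm hEH hmin
  have h2R := (hmin (2*R) (by positivity)).1
  have hA1 : frI n s (E ∩ ball 0 R) (Eᶜ ∩ halfSpace n) ≠ ⊤ := by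
    have hsplit : Eᶜ ∩ halfSpace n ⊆ (Eᶜ ∩ ball 0 (2*R)) ∪ (ball (0 : Rn n) (2*R))ᶜ := by
      intro x hx
      by_cases hxB : x ∈ ball (0 : Rn n) (2*R)
      · exact Or.inl ⟨hx.1, hxB⟩
      · exact Or.inr hxB
    have h1 : frI n s (E ∩ ball 0 R) (Eᶜ ∩ halfSpace n)
        ≤ frI n s (E ∩ ball 0 R) (Eᶜ ∩ ball 0 (2*R))
          + frI n s (E ∩ ball 0 R) (ball (0 : Rn n) (2*R))ᶜ :=
      (frI_mono n s subset_rfl hsplit).trans (frI_union_right n s _ _ _)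
    have h2 : frI n s (E ∩ ball 0 R) (Eᶜ ∩ ball 0 (2*R))
        ≤ frI n s (E ∩ ball 0 (2*R)) (Eᶜ ∩ ball 0 (2*R)) :=
      frI_mono n s (inter_subset_inter_right E hBRB2) subset_rfl
    have h3 : frI n s (E ∩ ball 0 R) (ball (0 : Rn n) (2*R))ᶜ
        ≤ kconst n s * ENNReal.ofReal (R ^ (-s)) * volume (E ∩ ball (0 : Rn n) R) := by
      refine frI_le_sepA n hs0 hR ?_
      intro x hx y hy
      rw [mem_compl_iff, mem_ball, not_lt, dist_comm, dist_eq_norm] at hy ⊢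
      have hy' : 2*R ≤ ‖y‖ := by simpa using hy
      have h2' : ‖x‖ < R := mem_ball_zero_iff.1 hx.2
      have h3' := norm_sub_norm_le y x
      rw [norm_sub_rev]
      linarith
    have h4 : volume (E ∩ ball (0 : Rn n) R) ≤ volume (ball (0 : Rn n) R) :=
      measure_mono inter_subset_right
    refine (h1.trans_lt (ENNReal.add_lt_top.2 ⟨h2.trans_lt h2R, h3.trans_lt ?_⟩)).ne
    exact ENNReal.mul_lt_top (ENNReal.mul_lt_top (kconst_lt_top n hs0) ENNReal.ofReal_lt_top)
      (h4.trans_lt measure_ball_lt_top)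
  have hA2 : frI n s (E ∩ (ball 0 R)ᶜ) (Eᶜ ∩ ball 0 R ∩ halfSpace n) ≠ ⊤ := by
    have hsplit : E ∩ (ball (0 : Rn n) R)ᶜ ⊆ (E ∩ ball 0 (2*R)) ∪ (ball (0 : Rn n) (2*R))ᶜ := by
      intro x hx
      by_cases hxB : x ∈ ball (0 : Rn n) (2*R)
      · exact Or.inl ⟨hx.1, hxB⟩
      · exact Or.inr hxB
    have h1 : frI n s (E ∩ (ball 0 R)ᶜ) (Eᶜ ∩ ball 0 R ∩ halfSpace n)
        ≤ frI n s (E ∩ ball 0 (2*R)) (Eᶜ ∩ ball 0 R ∩ halfSpace n)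
          + frI n s (ball (0 : Rn n) (2*R))ᶜ (Eᶜ ∩ ball 0 R ∩ halfSpace n) :=
      (frI_mono n s hsplit subset_rfl).trans (frI_union_left n s _ _ _)
    have h2 : frI n s (E ∩ ball 0 (2*R)) (Eᶜ ∩ ball 0 R ∩ halfSpace n)
        ≤ frI n s (E ∩ ball 0 (2*R)) (Eᶜ ∩ ball 0 (2*R)) :=
      frI_mono n s subset_rfl (fun x hx => ⟨hx.1.1, hBRB2 hx.1.2⟩)
    have h3 : frI n s (ball (0 : Rn n) (2*R))ᶜ (Eᶜ ∩ ball 0 R ∩ halfSpace n)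
        ≤ kconst n s * ENNReal.ofReal (R ^ (-s))
            * volume (Eᶜ ∩ ball (0 : Rn n) R ∩ halfSpace n) := by
      refine frI_le_sepB n hs0 hR ?_
      intro y hy x hx
      rw [mem_compl_iff, mem_ball, not_lt, dist_comm, dist_eq_norm] at hx ⊢
      have hx' : 2*R ≤ ‖x‖ := by simpa using hx
      have h2' : ‖y‖ < R := mem_ball_zero_iff.1 hy.1.2
      have h3' := norm_sub_norm_le x y
      rw [norm_sub_rev]
      linarith
    have h4 : volume (Eᶜ ∩ ball (0 : Rn n) R ∩ halfSpace n) ≤ volume (ball (0 : Rn n) R) :=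
      measure_mono (fun x hx => hx.1.2)
    refine (h1.trans_lt (ENNReal.add_lt_top.2 ⟨h2.trans_lt h2R, h3.trans_lt ?_⟩)).ne
    exact ENNReal.mul_lt_top (ENNReal.mul_lt_top (kconst_lt_top n hs0) ENNReal.ofReal_lt_top)
      (h4.trans_lt measure_ball_lt_top)
  have hA3Q : frI n s (E ∩ ball 0 R) (halfSpace n)ᶜ ≤ Q :=
    frI_mono n s (fun x hx => ⟨hx.2, hEH hx.1⟩) subset_rfl
  -- the competitor
  have hFm : MeasurableSet (E ∪ (ball 0 R ∩ halfSpace n)) :=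
    hEm.union (measurableSet_ball.inter hHm)
  have hFH : E ∪ (ball 0 R ∩ halfSpace n) ⊆ halfSpace n := union_subset hEH inter_subset_right
  have hFdiff : (E ∪ (ball 0 R ∩ halfSpace n)) \ ball 0 R = E \ ball 0 R := by
    ext x
    simp only [mem_diff, mem_union, mem_inter_iff]
    tauto
  have happ := (hmin R hR).2 _ hFm hFH hFdiff
  have hFBR : (E ∪ (ball 0 R ∩ halfSpace n)) ∩ ball 0 R = ball 0 R ∩ halfSpace n := by
    ext x
    have hEx := @hEH x
    simp only [mem_inter_iff, mem_union]
    constructor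
    · rintro ⟨hf, hb⟩
      rcases hf with hf | hf
      · exact ⟨hb, hEx hf⟩
      · exact ⟨hb, hf.2⟩
    · rintro ⟨hb, hh⟩
      exact ⟨Or.inr ⟨hb, hh⟩, hb⟩
  have hFBRc : (E ∪ (ball 0 R ∩ halfSpace n)) ∩ (ball 0 R)ᶜ = E ∩ (ball 0 R)ᶜ := by
    ext x
    simp only [mem_inter_iff, mem_union, mem_compl_iff]
    tauto
  have hFc2 : (E ∪ (ball 0 R ∩ halfSpace n))ᶜ ∩ ball 0 R ∩ halfSpace n = ∅ := by
    ext x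
    simp only [mem_inter_iff, mem_compl_iff, mem_union, mem_empty_iff_false]
    tauto
  rw [hFBR, hFBRc, hFc2] at happ
  have hb2 : frIr n s (E ∩ (ball 0 R)ᶜ) ∅ = 0 := by
    rw [frIr, frI_empty]; simp
  rw [hb2] at happ
  have hb1 : frIr n s (ball 0 R ∩ halfSpace n) ((E ∪ (ball 0 R ∩ halfSpace n))ᶜ ∩ halfSpace n)
      ≤ P.toReal := by
    refine ENNReal.toReal_mono hP.ne (frI_mono n s inter_subset_left ?_)
    intro x hx
    rw [mem_compl_iff]
    intro hxB
    exact hx.1 (Or.inr ⟨hxB, hx.2⟩)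
  have hb3 : frIr n s (ball 0 R ∩ halfSpace n) (halfSpace n)ᶜ = Q.toReal := rfl
  rw [hb3] at happ
  -- real arithmetic
  have ha3Q : frIr n s (E ∩ ball 0 R) (halfSpace n)ᶜ ≤ Q.toReal :=
    ENNReal.toReal_mono hQ.ne hA3Q
  have ha1n : 0 ≤ frIr n s (E ∩ ball 0 R) (Eᶜ ∩ halfSpace n) := ENNReal.toReal_nonneg
  have ha2n : 0 ≤ frIr n s (E ∩ (ball 0 R)ᶜ) (Eᶜ ∩ ball 0 R ∩ halfSpace n) :=
    ENNReal.toReal_nonneg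
  have ha3n : 0 ≤ frIr n s (E ∩ ball 0 R) (halfSpace n)ᶜ := ENNReal.toReal_nonneg
  have hQn : 0 ≤ Q.toReal := ENNReal.toReal_nonneg
  have hprod : σ * Q.toReal - σ * frIr n s (E ∩ ball 0 R) (halfSpace n)ᶜ
      ≤ Q.toReal - frIr n s (E ∩ ball 0 R) (halfSpace n)ᶜ := by
    nlinarith [mul_nonneg (by linarith : (0:ℝ) ≤ 1 - σ) (by linarith :
      (0:ℝ) ≤ Q.toReal - frIr n s (E ∩ ball 0 R) (halfSpace n)ᶜ)]
  have hkey1 : frIr n s (E ∩ ball 0 R) (Eᶜ ∩ halfSpace n) ≤ C0 := by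
    rw [hC0def]; linarith [happ]
  have hkey2 : frIr n s (E ∩ (ball 0 R)ᶜ) (Eᶜ ∩ ball 0 R ∩ halfSpace n) ≤ C0 := by
    rw [hC0def]; linarith [happ]
  have hA1le : frI n s (E ∩ ball 0 R) (Eᶜ ∩ halfSpace n) ≤ ENNReal.ofReal C0 := by
    rw [← ENNReal.ofReal_toReal hA1]
    exact ENNReal.ofReal_le_ofReal hkey1
  have hA2le : frI n s (E ∩ (ball 0 R)ᶜ) (Eᶜ ∩ ball 0 R ∩ halfSpace n) ≤ ENNReal.ofReal C0 := by
    rw [← ENNReal.ofReal_toReal hA2]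
    exact ENNReal.ofReal_le_ofReal hkey2
  -- the final decomposition
  have hsplitE : Eᶜ ⊆ (Eᶜ ∩ halfSpace n) ∪ (halfSpace n)ᶜ := by
    intro x hx
    by_cases hxH : x ∈ halfSpace n
    · exact Or.inl ⟨hx, hxH⟩
    · exact Or.inr hxH
  have hX1 : frI n s (E ∩ ball 0 (r + δ)) Eᶜ ≤ ENNReal.ofReal C0 + Q := by
    refine ((frI_mono n s subset_rfl hsplitE).trans (frI_union_right n s _ _ _)).trans ?_
    refine add_le_add ((frI_mono n s (inter_subset_inter_right E hBBR) subset_rfl).trans hA1le) ?_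
    exact frI_mono n s (fun x hx => ⟨hBBR hx.2, hEH hx.1⟩) subset_rfl
  have hXE : frI n s E (Eᶜ ∩ ball 0 (r + δ))
      ≤ (ENNReal.ofReal C0 + Q) + (ENNReal.ofReal C0 + W) := by
    have hsplit : E ⊆ (E ∩ ball 0 R) ∪ (E ∩ (ball (0 : Rn n) R)ᶜ) := by
      intro x hx
      by_cases hxB : x ∈ ball (0 : Rn n) R
      · exact Or.inl ⟨hx, hxB⟩
      · exact Or.inr ⟨hx, hxB⟩
    refine ((frI_mono n s hsplit subset_rfl).trans (frI_union_left n s _ _ _)).trans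
      (add_le_add ?_ ?_)
    · refine ((frI_mono n s subset_rfl (fun x hx => hsplitE hx.1)).trans
        (frI_union_right n s _ _ _)).trans ?_
      exact add_le_add hA1le hA3Q
    · have hsplit2 : Eᶜ ∩ ball 0 (r + δ) ⊆ (Eᶜ ∩ ball 0 R ∩ halfSpace n)
          ∪ (ball 0 (r + δ) ∩ (halfSpace n)ᶜ) := by
        intro x hx
        by_cases hxH : x ∈ halfSpace n
        · exact Or.inl ⟨⟨hx.1, hBBR hx.2⟩, hxH⟩
        · exact Or.inr ⟨hx.2, hxH⟩
      refine ((frI_mono n s subset_rfl hsplit2).trans (frI_union_right n s _ _ _)).trans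
        (add_le_add hA2le ?_)
      have hsep : ∀ y ∈ ball (0 : Rn n) (r + δ) ∩ (halfSpace n)ᶜ,
          E ∩ (ball (0 : Rn n) R)ᶜ ⊆ (ball y 1)ᶜ := by
        intro y hy x hx
        rw [mem_compl_iff, mem_ball, not_lt, dist_comm, dist_eq_norm]
        have hx' : R ≤ ‖x‖ := by
          have := hx.2
          rw [mem_compl_iff, mem_ball_zero_iff, not_lt] at this
          exact this
        have hy' : ‖y‖ < r + δ := mem_ball_zero_iff.1 hy.1
        have h3' := norm_sub_norm_le x y
        rw [norm_sub_rev]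
        rw [hRdef] at hx'
        linarith
      refine (frI_le_sepB n hs0 one_pos hsep).trans ?_
      exact mul_le_mul_right (measure_mono inter_subset_left) _
  have hX2 : frI n s (E ∩ (ball 0 (r + δ))ᶜ) (Eᶜ ∩ ball 0 (r + δ))
      ≤ (ENNReal.ofReal C0 + Q) + (ENNReal.ofReal C0 + W) :=
    (frI_mono n s inter_subset_left subset_rfl).trans hXE
  have hX3 : frI n s (Eᶜ ∩ ball 0 (r + δ)) E
      ≤ (ENNReal.ofReal C0 + Q) + (ENNReal.ofReal C0 + W) := by
    rw [frI_symm]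
    exact hXE
  have hX4 : frI n s (Eᶜ ∩ (ball 0 (r + δ))ᶜ) (E ∩ ball 0 (r + δ))
      ≤ ENNReal.ofReal C0 + Q := by
    rw [frI_symm]
    exact (frI_mono n s subset_rfl inter_subset_left).trans hX1
  -- pointwise bound and covering
  have hSm : MeasurableSet ((E ×ˢ Eᶜ) ∪ (Eᶜ ×ˢ E)) :=
    (hEm.prod hEm.compl).union (hEm.compl.prod hEm)
  have hptw : ∀ p : Rn n × Rn n,
      ENNReal.ofReal
        (|E.indicator (fun _ => (1 : ℝ)) p.1 - E.indicator (fun _ => (1 : ℝ)) p.2| ^ 2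
          * ‖p.1 - p.2‖ ^ (-((n : ℝ) + s)))
      ≤ ((E ×ˢ Eᶜ) ∪ (Eᶜ ×ˢ E)).indicator
          (fun q => ENNReal.ofReal (‖q.1 - q.2‖ ^ (-((n : ℝ) + s)))) p := by
    intro p
    by_cases h1 : p.1 ∈ E <;> by_cases h2 : p.2 ∈ E
    · have hmem : p ∉ (E ×ˢ Eᶜ) ∪ (Eᶜ ×ˢ E) := by
        simp [Set.mem_prod, h1, h2]
      rw [Set.indicator_of_notMem hmem]
      simp [Set.indicator_of_mem, h1, h2]
    · have hmem : p ∈ (E ×ˢ Eᶜ) ∪ (Eᶜ ×ˢ E) := Or.inl ⟨h1, h2⟩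
      rw [Set.indicator_of_mem hmem]
      simp [Set.indicator_of_mem, Set.indicator_of_notMem, h1, h2]
    · have hmem : p ∈ (E ×ˢ Eᶜ) ∪ (Eᶜ ×ˢ E) := Or.inr ⟨h1, h2⟩
      rw [Set.indicator_of_mem hmem]
      simp [Set.indicator_of_mem, Set.indicator_of_notMem, h1, h2, abs_sub_comm]
    · have hmem : p ∉ (E ×ˢ Eᶜ) ∪ (Eᶜ ×ˢ E) := by
        simp [Set.mem_prod, h1, h2]
      rw [Set.indicator_of_notMem hmem]
      simp [Set.indicator_of_notMem, h1, h2]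
  have hcover : ((E ×ˢ Eᶜ) ∪ (Eᶜ ×ˢ E))
        ∩ (((ball (0 : Rn n) (r + δ))ᶜ) ×ˢ ((ball (0 : Rn n) (r + δ))ᶜ))ᶜ
      ⊆ (((E ∩ ball 0 (r + δ)) ×ˢ Eᶜ ∪ (E ∩ (ball 0 (r + δ))ᶜ) ×ˢ (Eᶜ ∩ ball 0 (r + δ)))
          ∪ (Eᶜ ∩ ball 0 (r + δ)) ×ˢ E)
          ∪ (Eᶜ ∩ (ball 0 (r + δ))ᶜ) ×ˢ (E ∩ ball 0 (r + δ)) := by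
    rintro ⟨x, y⟩ ⟨hS, hQc⟩
    have hor : x ∈ ball (0 : Rn n) (r + δ) ∨ y ∈ ball (0 : Rn n) (r + δ) := by
      by_contra hc
      push_neg at hc
      exact hQc ⟨hc.1, hc.2⟩
    rcases hS with ⟨h1, h2⟩ | ⟨h1, h2⟩
    · by_cases hxB : x ∈ ball (0 : Rn n) (r + δ)
      · exact Or.inl (Or.inl (Or.inl ⟨⟨h1, hxB⟩, h2⟩))
      · have hyB : y ∈ ball (0 : Rn n) (r + δ) := hor.resolve_left hxB
        exact Or.inl (Or.inl (Or.inr ⟨⟨h1, hxB⟩, ⟨h2, hyB⟩⟩))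
    · by_cases hxB : x ∈ ball (0 : Rn n) (r + δ)
      · exact Or.inl (Or.inr ⟨⟨h1, hxB⟩, h2⟩)
      · have hyB : y ∈ ball (0 : Rn n) (r + δ) := hor.resolve_left hxB
        exact Or.inr ⟨⟨h1, hxB⟩, ⟨h2, hyB⟩⟩
  calc ∫⁻ p in (((ball (0 : Rn n) (r + δ))ᶜ) ×ˢ ((ball (0 : Rn n) (r + δ))ᶜ))ᶜ,
        ENNReal.ofReal
          (|E.indicator (fun _ => (1 : ℝ)) p.1 - E.indicator (fun _ => (1 : ℝ)) p.2| ^ 2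
            * ‖p.1 - p.2‖ ^ (-((n : ℝ) + s)))
      ≤ ∫⁻ p in (((ball (0 : Rn n) (r + δ))ᶜ) ×ˢ ((ball (0 : Rn n) (r + δ))ᶜ))ᶜ,
          ((E ×ˢ Eᶜ) ∪ (Eᶜ ×ˢ E)).indicator
            (fun q => ENNReal.ofReal (‖q.1 - q.2‖ ^ (-((n : ℝ) + s)))) p :=
        lintegral_mono hptw
    _ = ∫⁻ p in ((E ×ˢ Eᶜ) ∪ (Eᶜ ×ˢ E))
          ∩ (((ball (0 : Rn n) (r + δ))ᶜ) ×ˢ ((ball (0 : Rn n) (r + δ))ᶜ))ᶜ,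
          ENNReal.ofReal (‖p.1 - p.2‖ ^ (-((n : ℝ) + s))) := by
        rw [lintegral_indicator hSm, Measure.restrict_restrict hSm]
    _ ≤ ∫⁻ p in (((E ∩ ball 0 (r + δ)) ×ˢ Eᶜ
            ∪ (E ∩ (ball 0 (r + δ))ᶜ) ×ˢ (Eᶜ ∩ ball 0 (r + δ)))
            ∪ (Eᶜ ∩ ball 0 (r + δ)) ×ˢ E)
            ∪ (Eᶜ ∩ (ball 0 (r + δ))ᶜ) ×ˢ (E ∩ ball 0 (r + δ)),
          ENNReal.ofReal (‖p.1 - p.2‖ ^ (-((n : ℝ) + s))) := lintegral_mono_set hcover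
    _ ≤ (frI n s (E ∩ ball 0 (r + δ)) Eᶜ
          + frI n s (E ∩ (ball 0 (r + δ))ᶜ) (Eᶜ ∩ ball 0 (r + δ))
          + frI n s (Eᶜ ∩ ball 0 (r + δ)) E)
          + frI n s (Eᶜ ∩ (ball 0 (r + δ))ᶜ) (E ∩ ball 0 (r + δ)) := by
        refine (lintegral_union_le _ _ _).trans (add_le_add ?_ le_rfl)
        refine (lintegral_union_le _ _ _).trans (add_le_add ?_ le_rfl)
        exact lintegral_union_le _ _ _
    _ ≤ ((ENNReal.ofReal C0 + Q)
          + ((ENNReal.ofReal C0 + Q) + (ENNReal.ofReal C0 + W))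
          + ((ENNReal.ofReal C0 + Q) + (ENNReal.ofReal C0 + W)))
          + (ENNReal.ofReal C0 + Q) :=
        add_le_add (add_le_add (add_le_add hX1 hX2) hX3) hX4
    _ = M := by rw [hMdef]; ring
    _ ≤ ENNReal.ofReal (M.toReal + 1) := by
        nth_rewrite 1 [← ENNReal.ofReal_toReal hM]
        exact ENNReal.ofReal_le_ofReal (by linarith)
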